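/- Let ρ be a bipartite distribution on U × V, let n ≥ 1, and let 0 < p ≤ 1. Then n · agr_ρ(p) ≤ 2 · col_ρ(n, p) (trivially true if col_ρ(n, p) = ∞). -/

import Mathlib

open scoped BigOperators ENNReal

namespace SR

variable {U V X Y : Type*}

/-- `μ` is a probability distribution on a finite type. -/
def IsDist {α : Type*} [Fintype α] (μ : α → ℝ) : Prop :=
  (∀ a, 0 ≤ μ a) ∧ ∑ a, μ a = 1

/-- Expectation of `f` under `μ`. -/
def expect {α : Type*} [Fintype α] (μ : α → ℝ) (f : α → ℝ) : ℝ :=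
  ∑ a, μ a * f a

/-- First (`U`-)marginal of a bipartite distribution. -/
def margFst [Fintype V] (ρ : U × V → ℝ) : U → ℝ :=
  fun u => ∑ v, ρ (u, v)

/-- Second (`V`-)marginal of a bipartite distribution. -/
def margSnd [Fintype U] (ρ : U × V → ℝ) : V → ℝ :=
  fun v => ∑ u, ρ (u, v)

/-- Maximum correlation of a bipartite distribution (sSup of the empty set is 0). -/
noncomputable def cor [Fintype U] [Fintype V] (ρ : U × V → ℝ) : ℝ :=
  sSup { t : ℝ | ∃ (f : U → ℝ) (g : V → ℝ),
      expect (margFst ρ) f = 0 ∧ expect (margSnd ρ) g = 0 ∧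
      expect (margFst ρ) (fun u => f u ^ 2) = 1 ∧
      expect (margSnd ρ) (fun v => g v ^ 2) = 1 ∧
      t = ∑ x : U × V, ρ x * (f x.1 * g x.2) }

/-- Tensor product of two bipartite distributions. -/
def tensor (ρ : U × V → ℝ) (σ : X × Y → ℝ) : (U × X) × (V × Y) → ℝ :=
  fun p => ρ (p.1.1, p.2.1) * σ (p.1.2, p.2.2)

/-- Tensor product of a family of bipartite distributions. -/
def tensorPi {n : ℕ} {U V : Fin n → Type*} (ρ : ∀ i, U i × V i → ℝ) :
    (∀ i, U i) × (∀ i, V i) → ℝ :=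
  fun p => ∏ i, ρ i (p.1 i, p.2 i)

/-- The distribution of `ℓ` i.i.d. samples from a bipartite distribution `ρ`. -/
def iid (ρ : U × V → ℝ) (ℓ : ℕ) : (Fin ℓ → U) × (Fin ℓ → V) → ℝ :=
  fun p => ∏ i, ρ (p.1 i, p.2 i)

/-- Agreement complexity of `ρ` at success probability `p`. -/
noncomputable def agr [Fintype U] [Fintype V] (ρ : U × V → ℝ) (p : ℝ) : ℝ :=
  sInf { c : ℝ | ∃ (ℓ : ℕ) (f : (Fin ℓ → U) → ℝ) (g : (Fin ℓ → V) → ℝ),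
      (∀ x, f x ∈ Set.Icc (0:ℝ) 1) ∧ (∀ y, g y ∈ Set.Icc (0:ℝ) 1) ∧
      p ≤ (∑ x : (Fin ℓ → U) × (Fin ℓ → V), iid ρ ℓ x * (f x.1 * g x.2)) ∧
      c = (∑ x : (Fin ℓ → U) × (Fin ℓ → V), iid ρ ℓ x * f x.1)
        + (∑ x : (Fin ℓ → U) × (Fin ℓ → V), iid ρ ℓ x * g x.2) }

/-- There is a `p`-collision protocol for `ρ` with domain size `n` and output size at most `k`.
    The players may use private randomness (uniform over `Fin sA`, `Fin sB` weighted by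
    distributions `μA`, `μB`, independent of everything else). -/
def ColLE [Fintype U] [Fintype V] (ρ : U × V → ℝ) (n : ℕ) (p : ℝ) (k : ℕ) : Prop :=
  ∃ (ℓ sA sB : ℕ) (μA : Fin sA → ℝ) (μB : Fin sB → ℝ)
    (A : (Fin ℓ → U) → Fin sA → Finset (Fin n))
    (B : (Fin ℓ → V) → Fin sB → Finset (Fin n)),
    IsDist μA ∧ IsDist μB ∧
    (∀ i : Fin n, p ≤ ∑ x : (Fin ℓ → U) × (Fin ℓ → V), ∑ rA, ∑ rB,
        iid ρ ℓ x * (μA rA * μB rB) *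
          (if i ∈ A x.1 rA ∧ i ∈ B x.2 rB then (1:ℝ) else 0)) ∧
    (∀ (x : (Fin ℓ → U) × (Fin ℓ → V)) (rA : Fin sA),
        0 < iid ρ ℓ x → 0 < μA rA → (A x.1 rA).card ≤ k) ∧
    (∀ (x : (Fin ℓ → U) × (Fin ℓ → V)) (rB : Fin sB),
        0 < iid ρ ℓ x → 0 < μB rB → (B x.2 rB).card ≤ k)

/-- Collision complexity `col_ρ(n, p)`, valued in `ℕ∞` (`sInf ∅ = ⊤`). -/
noncomputable def col [Fintype U] [Fintype V] (ρ : U × V → ℝ) (n : ℕ) (p : ℝ) : ℕ∞ :=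
  sInf { k : ℕ∞ | ∃ m : ℕ, k = (m : ℕ∞) ∧ ColLE ρ n p m }

/-- Base-2 Shannon entropy of a finitely supported distribution. -/
noncomputable def ent2 {α : Type*} [Fintype α] (μ : α → ℝ) : ℝ :=
  ∑ a, -(μ a * Real.logb 2 (μ a))

open Classical in
/-- Probability of an event under `μ`. -/
noncomputable def prEvent {Ω : Type*} [Fintype Ω] (μ : Ω → ℝ) (P : Ω → Prop) : ℝ :=
  ∑ ω, if P ω then μ ω else 0

/-- The distribution of a random variable `Z` conditioned on an event `P`. -/
noncomputable def condDist {Ω α : Type*} [Fintype Ω] (μ : Ω → ℝ) (Z : Ω → α)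
    (P : Ω → Prop) : α → ℝ :=
  fun a => prEvent μ (fun ω => Z ω = a ∧ P ω) / prEvent μ P

/-- The `L^r(μ)`-norm of a complex-valued function on a finite probability space. -/
noncomputable def lnorm {α : Type*} [Fintype α] (μ : α → ℝ) (r : ℝ) (h : α → ℂ) : ℝ :=
  (∑ a, μ a * ‖h a‖ ^ r) ^ (1 / r)

/-- The conditional-expectation operator `T_ρ` of a bipartite distribution. -/
noncomputable def condOp [Fintype U] [Fintype V] (ρ : U × V → ℝ) (f : U → ℂ) : V → ℂ :=
  fun v => ∑ u, ((ρ (u, v) / margSnd ρ v : ℝ) : ℂ) * f u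

/-- `ρ` is `q`-to-`p` hypercontractive. -/
def Hyper [Fintype U] [Fintype V] (ρ : U × V → ℝ) (q p : ℝ) : Prop :=
  ∀ f : U → ℂ, lnorm (margSnd ρ) q (condOp ρ f) ≤ lnorm (margFst ρ) p f

/-- Inner product over 𝔽₂. -/
def ipF2 {m : ℕ} (u v : Fin m → ZMod 2) : ZMod 2 := ∑ i, u i * v i

/-- `σ_{m,b}`: uniform distribution on pairs `(u,v) ∈ 𝔽₂^m × 𝔽₂^m` with `u·v = b`. -/
noncomputable def sigmaIP (m : ℕ) (b : ZMod 2) :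
    ((Fin m → ZMod 2) × (Fin m → ZMod 2)) → ℝ :=
  fun p => if ipF2 p.1 p.2 = b then
      (((Finset.univ.filter
        (fun q : (Fin m → ZMod 2) × (Fin m → ZMod 2) => ipF2 q.1 q.2 = b)).card : ℝ))⁻¹
    else 0

/-- `ρ_disj`: uniform distribution on `{(0,0),(0,1),(1,0)} ⊆ {0,1} × {0,1}`
    (with `false = 0`, `true = 1`). -/
noncomputable def rhoDisj : Bool × Bool → ℝ :=
  fun x => if x = (true, true) then 0 else 1/3


lemma iid_nonneg' {U V : Type} [Fintype U] [Fintype V] {ρ : U × V → ℝ}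
    (hρ : ∀ y, 0 ≤ ρ y) (ℓ : ℕ) (x : (Fin ℓ → U) × (Fin ℓ → V)) : 0 ≤ iid ρ ℓ x :=
  Finset.prod_nonneg fun _ _ => hρ _

lemma iid_sum' {U V : Type} [Fintype U] [Fintype V] {ρ : U × V → ℝ}
    (hρ : ∑ y, ρ y = 1) (ℓ : ℕ) :
    ∑ x : (Fin ℓ → U) × (Fin ℓ → V), iid ρ ℓ x = 1 := by
  calc ∑ x : (Fin ℓ → U) × (Fin ℓ → V), iid ρ ℓ x
      = ∑ h : Fin ℓ → U × V, ∏ i, ρ (h i) := by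
        refine Fintype.sum_equiv (Equiv.arrowProdEquivProdArrow (Fin ℓ) (fun _ => U) (fun _ => V)).symm _ _ ?_
        intro x; rfl
    _ = 1 := by
        rw [← Fintype.piFinset_univ, ← Finset.prod_univ_sum]
        simp [hρ]

lemma agr_le_of_colLE {U V : Type} [Fintype U] [Fintype V] {ρ : U × V → ℝ}
    (hρ : IsDist ρ) {n : ℕ} (hn : 1 ≤ n) {p : ℝ} {m : ℕ}
    (h : ColLE ρ n p m) : agr ρ p ≤ 2 * m / n := by
  obtain ⟨ℓ, sA, sB, μA, μB, A, B, hμA, hμB, hsucc, hA, hB⟩ := h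
  have hiid0 : ∀ x : (Fin ℓ → U) × (Fin ℓ → V), 0 ≤ iid ρ ℓ x := iid_nonneg' hρ.1 ℓ
  have hiid1 := iid_sum' hρ.2 ℓ
  set F : Fin n → (Fin ℓ → U) → ℝ :=
    fun i u => ∑ rA, μA rA * (if i ∈ A u rA then 1 else 0) with hF
  set G : Fin n → (Fin ℓ → V) → ℝ :=
    fun i v => ∑ rB, μB rB * (if i ∈ B v rB then 1 else 0) with hG
  have hF01 : ∀ i u, F i u ∈ Set.Icc (0:ℝ) 1 := by
    intro i u
    constructor
    · exact Finset.sum_nonneg fun rA _ =>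
        mul_nonneg (hμA.1 rA) (by split <;> norm_num)
    · calc F i u ≤ ∑ rA, μA rA * 1 :=
          Finset.sum_le_sum fun rA _ =>
            mul_le_mul_of_nonneg_left (by split <;> norm_num) (hμA.1 rA)
        _ = 1 := by simp [hμA.2]
  have hG01 : ∀ i v, G i v ∈ Set.Icc (0:ℝ) 1 := by
    intro i v
    constructor
    · exact Finset.sum_nonneg fun rB _ =>
        mul_nonneg (hμB.1 rB) (by split <;> norm_num)
    · calc G i v ≤ ∑ rB, μB rB * 1 :=
          Finset.sum_le_sum fun rB _ =>
            mul_le_mul_of_nonneg_left (by split <;> norm_num) (hμB.1 rB)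
        _ = 1 := by simp [hμB.2]
  have e1 : ∀ (x : (Fin ℓ → U) × (Fin ℓ → V)) (i : Fin n), F i x.1 * G i x.2
      = ∑ rA, ∑ rB, (μA rA * μB rB) *
          (if i ∈ A x.1 rA ∧ i ∈ B x.2 rB then (1:ℝ) else 0) := by
    intro x i
    simp only [hF, hG]
    rw [Finset.sum_mul_sum]
    apply Finset.sum_congr rfl
    intro rA _
    apply Finset.sum_congr rfl
    intro rB _
    by_cases h1 : i ∈ A x.1 rA <;> by_cases h2 : i ∈ B x.2 rB <;>
      simp [h1, h2] <;> ring
  have hEsucc : ∀ i, p ≤ ∑ x : (Fin ℓ → U) × (Fin ℓ → V),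
      iid ρ ℓ x * (F i x.1 * G i x.2) := by
    intro i
    refine (hsucc i).trans_eq ?_
    apply Finset.sum_congr rfl
    intro x _
    rw [e1 x i, Finset.mul_sum]
    apply Finset.sum_congr rfl
    intro rA _
    rw [Finset.mul_sum]
    apply Finset.sum_congr rfl
    intro rB _
    ring
  -- total cost bound
  have keyA : ∀ (W : Type) (_ : Fintype W) (sC : ℕ) (μ : Fin sC → ℝ)
      (hμ : IsDist μ) (C : W → Fin sC → Finset (Fin n)) (π : (Fin ℓ → U) × (Fin ℓ → V) → W)
      (hC : ∀ x rC, 0 < iid ρ ℓ x → 0 < μ rC → (C (π x) rC).card ≤ m),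
      ∑ i : Fin n, ∑ x : (Fin ℓ → U) × (Fin ℓ → V),
        iid ρ ℓ x * (∑ rC, μ rC * (if i ∈ C (π x) rC then (1:ℝ) else 0)) ≤ m := by
    intro W _ sC μ hμ C π hC
    rw [Finset.sum_comm]
    have hx : ∀ x : (Fin ℓ → U) × (Fin ℓ → V),
        ∑ i : Fin n, iid ρ ℓ x * (∑ rC, μ rC * (if i ∈ C (π x) rC then (1:ℝ) else 0))
          ≤ iid ρ ℓ x * m := by
      intro x
      rw [← Finset.mul_sum]
      have hsF : ∑ i : Fin n, (∑ rC, μ rC * (if i ∈ C (π x) rC then (1:ℝ) else 0))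
          = ∑ rC, μ rC * ((C (π x) rC).card : ℝ) := by
        rw [Finset.sum_comm]
        refine Finset.sum_congr rfl fun rC _ => ?_
        rw [← Finset.mul_sum]
        congr 1
        simp [Finset.sum_boole]
      rw [hsF]
      rcases eq_or_lt_of_le (hiid0 x) with h0 | h0
      · rw [← h0]; simp
      · refine mul_le_mul_of_nonneg_left ?_ (le_of_lt h0)
        calc ∑ rC, μ rC * ((C (π x) rC).card : ℝ) ≤ ∑ rC, μ rC * m := by
              refine Finset.sum_le_sum fun rC _ => ?_
              rcases eq_or_lt_of_le (hμ.1 rC) with hr | hr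
              · rw [← hr]; simp
              · exact mul_le_mul_of_nonneg_left
                  (by exact_mod_cast hC x rC h0 hr) (hμ.1 rC)
          _ = m := by rw [← Finset.sum_mul, hμ.2, one_mul]
    calc ∑ x : (Fin ℓ → U) × (Fin ℓ → V), ∑ i : Fin n,
          iid ρ ℓ x * (∑ rC, μ rC * (if i ∈ C (π x) rC then (1:ℝ) else 0))
        ≤ ∑ x : (Fin ℓ → U) × (Fin ℓ → V), iid ρ ℓ x * m :=
          Finset.sum_le_sum fun x _ => hx x
      _ = m := by rw [← Finset.sum_mul, hiid1, one_mul]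
  have hsumA : ∑ i : Fin n, ∑ x : (Fin ℓ → U) × (Fin ℓ → V), iid ρ ℓ x * F i x.1 ≤ m :=
    keyA (Fin ℓ → U) inferInstance sA μA hμA A Prod.fst (fun x rC => hA x rC)
  have hsumB : ∑ i : Fin n, ∑ x : (Fin ℓ → U) × (Fin ℓ → V), iid ρ ℓ x * G i x.2 ≤ m :=
    keyA (Fin ℓ → V) inferInstance sB μB hμB B Prod.snd (fun x rC => hB x rC)
  -- there is a coordinate with small cost
  have hn0 : (0:ℝ) < n := by exact_mod_cast Nat.lt_of_lt_of_le Nat.zero_lt_one hn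
  have hex : ∃ i : Fin n,
      (∑ x : (Fin ℓ → U) × (Fin ℓ → V), iid ρ ℓ x * F i x.1)
      + (∑ x : (Fin ℓ → U) × (Fin ℓ → V), iid ρ ℓ x * G i x.2) ≤ 2 * m / n := by
    have hne : (Finset.univ : Finset (Fin n)).Nonempty := by
      have : NeZero n := ⟨by omega⟩
      exact Finset.univ_nonempty
    have hsum : ∑ i : Fin n,
        ((∑ x : (Fin ℓ → U) × (Fin ℓ → V), iid ρ ℓ x * F i x.1)
          + (∑ x : (Fin ℓ → U) × (Fin ℓ → V), iid ρ ℓ x * G i x.2))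
        ≤ ∑ _i : Fin n, (2 * m / n : ℝ) := by
      rw [Finset.sum_add_distrib, Finset.sum_const, Finset.card_univ, Fintype.card_fin,
        nsmul_eq_mul]
      have : (n:ℝ) * (2 * m / n) = 2 * m := by field_simp
      rw [this]
      linarith [hsumA, hsumB]
    obtain ⟨i, _, hi⟩ := Finset.exists_le_of_sum_le hne hsum
    exact ⟨i, hi⟩
  obtain ⟨i, hi⟩ := hex
  refine le_trans (csInf_le ?_ ?_) hi
  · refine ⟨0, fun c hc => ?_⟩
    obtain ⟨ℓ', f, g, hf, hg, _, hc⟩ := hc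
    rw [hc]
    have h1 : 0 ≤ ∑ x : (Fin ℓ' → U) × (Fin ℓ' → V), iid ρ ℓ' x * f x.1 :=
      Finset.sum_nonneg fun x _ => mul_nonneg (iid_nonneg' hρ.1 ℓ' x) (hf x.1).1
    have h2 : 0 ≤ ∑ x : (Fin ℓ' → U) × (Fin ℓ' → V), iid ρ ℓ' x * g x.2 :=
      Finset.sum_nonneg fun x _ => mul_nonneg (iid_nonneg' hρ.1 ℓ' x) (hg x.2).1
    linarith
  · exact ⟨ℓ, F i, G i, hF01 i, hG01 i, hEsucc i, rfl⟩

theorem stmt6 {U V : Type} [Fintype U] [Fintype V] [Nonempty U] [Nonempty V]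
    (ρ : U × V → ℝ) (hρ : IsDist ρ) (n : ℕ) (hn : 1 ≤ n)
    (p : ℝ) (hp0 : 0 < p) (hp1 : p ≤ 1) :
    ENNReal.ofReal ((n : ℝ) * agr ρ p) ≤ 2 * ((col ρ n p : ℕ∞) : ℝ≥0∞) := by
  rcases eq_or_ne (col ρ n p) ⊤ with hc | hc
  · rw [hc]
    simp
  · have hne : {k : ℕ∞ | ∃ m : ℕ, k = (m : ℕ∞) ∧ ColLE ρ n p m}.Nonempty := by
      by_contra hE
      rw [Set.not_nonempty_iff_eq_empty] at hE
      exact hc (by rw [col, hE, sInf_empty])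
    have hmem : col ρ n p ∈ {k : ℕ∞ | ∃ m : ℕ, k = (m : ℕ∞) ∧ ColLE ρ n p m} := by
      rw [col]; exact csInf_mem hne
    obtain ⟨m, hm, hcm⟩ := hmem
    have hagr : agr ρ p ≤ 2 * m / n := agr_le_of_colLE hρ hn hcm
    have hn0 : (0:ℝ) < n := by exact_mod_cast Nat.lt_of_lt_of_le Nat.zero_lt_one hn
    have h1 : (n : ℝ) * agr ρ p ≤ 2 * m := by
      calc (n : ℝ) * agr ρ p ≤ n * (2 * m / n) :=
            mul_le_mul_of_nonneg_left hagr hn0.le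
        _ = 2 * m := by field_simp
    rw [hm]
    calc ENNReal.ofReal ((n : ℝ) * agr ρ p) ≤ ENNReal.ofReal (2 * m) :=
          ENNReal.ofReal_le_ofReal h1
      _ = 2 * (m : ℝ≥0∞) := by
          rw [ENNReal.ofReal_mul (by norm_num), ENNReal.ofReal_natCast]
          norm_num
      _ ≤ 2 * (((m : ℕ∞) : ℝ≥0∞)) := by
          simp

end SR
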